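/- Let n be a positive even integer and let v_0,…,v_{n+1} ∈ ℝⁿ be hereditarily spanning. Then the coboundary of pcoc vanishes at this tuple: ∑_{i=0}^{n+1} (−1)^i pcoc(v_0,…,v̂_i,…,v_{n+1}) = 0. -/

import Mathlib

noncomputable section

/-- Sign of the determinant of the matrix whose columns are `v 0, …, v (n-1)`
(zero if they do not form a basis). -/
def oriV {n : ℕ} (v : Fin n → (Fin n → ℝ)) : ℝ :=
  Real.sign (Matrix.det (Matrix.of fun i j => v j i))

/-- `pcoc(v_0,…,v_n) = ∏_{i=0}^{n} ori(v_0,…,v̂_i,…,v_n)`. -/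
def pcoc {n : ℕ} (v : Fin (n + 1) → (Fin n → ℝ)) : ℝ :=
  ∏ i : Fin (n + 1), oriV (v ∘ i.succAbove)

/-- A `k`-tuple of vectors of `ℝⁿ` is hereditarily spanning if every subcollection of `n`
of its entries spans `ℝⁿ`. -/
def HerSpan {n k : ℕ} (v : Fin k → (Fin n → ℝ)) : Prop :=
  ∀ s : Finset (Fin k), s.card = n → Submodule.span ℝ (v '' ↑s) = ⊤

/-! ### Auxiliary lemmas -/

lemma sgn_mul (a b : ℝ) : Real.sign (a * b) = Real.sign a * Real.sign b := by
  rcases lt_trichotomy a 0 with ha | ha | ha <;> rcases lt_trichotomy b 0 with hb | hb | hb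
  · rw [Real.sign_of_pos (mul_pos_of_neg_of_neg ha hb), Real.sign_of_neg ha,
      Real.sign_of_neg hb]; ring
  · subst hb; simp [Real.sign_zero]
  · rw [Real.sign_of_neg (mul_neg_of_neg_of_pos ha hb), Real.sign_of_neg ha,
      Real.sign_of_pos hb]; ring
  · subst ha; simp [Real.sign_zero]
  · subst ha; simp [Real.sign_zero]
  · subst ha; simp [Real.sign_zero]
  · rw [Real.sign_of_neg (mul_neg_of_pos_of_neg ha hb), Real.sign_of_pos ha,
      Real.sign_of_neg hb]; ring
  · subst hb; simp [Real.sign_zero]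
  · rw [Real.sign_of_pos (mul_pos ha hb), Real.sign_of_pos ha, Real.sign_of_pos hb]; ring

lemma sgn_sq {a : ℝ} (h : a ≠ 0) : Real.sign a * Real.sign a = 1 := by
  rcases lt_trichotomy a 0 with ha | ha | ha
  · rw [Real.sign_of_neg ha]; ring
  · exact absurd ha h
  · rw [Real.sign_of_pos ha]; ring

lemma sgn_neg_one_pow (m : ℕ) : Real.sign ((-1 : ℝ) ^ m) = (-1 : ℝ) ^ m := by
  rcases Nat.even_or_odd m with h | h
  · rw [h.neg_one_pow, Real.sign_one]
  · rw [h.neg_one_pow]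
    exact Real.sign_of_neg (by norm_num)

lemma sa_val {m : ℕ} (p : Fin (m + 1)) (i : Fin m) :
    ((p.succAbove i : Fin (m + 1)) : ℕ) = if (i : ℕ) < (p : ℕ) then (i : ℕ) else (i : ℕ) + 1 := by
  rw [Fin.succAbove]
  split_ifs with h1 h2 h2
  · rfl
  · exact absurd h1 (by simpa [Fin.lt_def] using h2)
  · exact absurd (by simpa [Fin.lt_def] using h2) h1
  · rfl

lemma sa_sym {m : ℕ} (i j : Fin (m + 2)) (i' j' : Fin (m + 1))
    (hj : i.succAbove j' = j) (hi : j.succAbove i' = i) (k : Fin m) :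
    i.succAbove (j'.succAbove k) = j.succAbove (i'.succAbove k) := by
  have h1 := congrArg (Fin.val) hj
  have h2 := congrArg (Fin.val) hi
  rw [sa_val] at h1 h2
  apply Fin.ext
  rw [sa_val, sa_val, sa_val, sa_val]
  split_ifs at * <;> omega

lemma sa_parity {m : ℕ} (i j : Fin (m + 2)) (i' j' : Fin (m + 1))
    (hj : i.succAbove j' = j) (hi : j.succAbove i' = i) :
    (i' : ℕ) + (j' : ℕ) + 1 = (i : ℕ) + (j : ℕ) := by
  have hne : j ≠ i := hj ▸ Fin.succAbove_ne i j'
  have hne' : (j : ℕ) ≠ (i : ℕ) := fun h => hne (Fin.ext h)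
  have h1 := congrArg (Fin.val) hj
  have h2 := congrArg (Fin.val) hi
  rw [sa_val] at h1 h2
  split_ifs at * <;> omega

lemma cramer_rel {n : ℕ} (u : Fin (n + 1) → Fin n → ℝ) (r : Fin n) :
    ∑ j : Fin (n + 1), ((-1 : ℝ) ^ (j : ℕ) * (Matrix.of fun a k => u (j.succAbove k) a).det) * u j r
      = 0 := by
  set B : Matrix (Fin (n + 1)) (Fin (n + 1)) ℝ :=
    Matrix.of fun a b => Fin.cases (u b r) (fun a' => u b a') a with hB
  have hdet : B.det = 0 := by
    apply Matrix.det_zero_of_row_eq (Fin.succ_ne_zero r).symm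
    funext b
    simp [hB]
  rw [Matrix.det_succ_row_zero] at hdet
  rw [← hdet]
  apply Finset.sum_congr rfl
  intro j _
  have h1 : B 0 j = u j r := by simp [hB]
  have h2 : (B.submatrix Fin.succ j.succAbove) = Matrix.of fun a k => u (j.succAbove k) a := by
    ext a k
    simp [hB, Matrix.submatrix_apply]
  rw [h1, h2]
  ring

lemma det_ne_zero_of_herspan {n k : ℕ} (v : Fin k → Fin n → ℝ) (hv : HerSpan v)
    (f : Fin n → Fin k) (hf : Function.Injective f) :
    (Matrix.of fun a b => v (f b) a).det ≠ 0 := by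
  set M : Matrix (Fin n) (Fin n) ℝ := Matrix.of fun a b => v (f b) a with hM
  intro hdet
  obtain ⟨c, hc0, hc⟩ := (Matrix.exists_mulVec_eq_zero_iff).2 hdet
  have hspan : Submodule.span ℝ (Set.range M.transpose) = ⊤ := by
    have hs : (Finset.univ.image f).card = n := by
      rw [Finset.card_image_of_injective _ hf, Finset.card_univ, Fintype.card_fin]
    have := hv (Finset.univ.image f) hs
    rw [← this]
    congr 1
    rw [Finset.coe_image, Finset.coe_univ, Set.image_univ, ← Set.range_comp]
    rfl
  have hsurj : Function.Surjective M.mulVecLin := by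
    rw [← LinearMap.range_eq_top, Matrix.range_mulVecLin]; exact hspan
  have hinj : Function.Injective M.mulVecLin :=
    (LinearMap.injective_iff_surjective).2 hsurj
  exact hc0 (hinj (by simpa [Matrix.mulVecLin_apply] using hc))

def Dmat {n : ℕ} (v : Fin (n + 2) → Fin n → ℝ) (i : Fin (n + 2)) (j' : Fin (n + 1)) :
    Matrix (Fin n) (Fin n) ℝ :=
  Matrix.of fun a k => v (i.succAbove (j'.succAbove k)) a

def Rrel {n : ℕ} (v : Fin (n + 2) → Fin n → ℝ) (i : Fin (n + 2)) : Fin (n + 2) → ℝ :=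
  i.insertNth 0 (fun j' => (-1 : ℝ) ^ (j' : ℕ) * (Dmat v i j').det)

lemma Dmat_det_ne {n : ℕ} (v : Fin (n + 2) → Fin n → ℝ) (hv : HerSpan v)
    (i : Fin (n + 2)) (j' : Fin (n + 1)) : (Dmat v i j').det ≠ 0 :=
  det_ne_zero_of_herspan v hv _
    (Fin.succAbove_right_injective.comp Fin.succAbove_right_injective)

lemma Dmat_sym {n : ℕ} (v : Fin (n + 2) → Fin n → ℝ) (i j : Fin (n + 2)) (i' j' : Fin (n + 1))
    (hj : i.succAbove j' = j) (hi : j.succAbove i' = i) :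
    Dmat v i j' = Dmat v j i' := by
  ext a k
  simp only [Dmat, Matrix.of_apply]
  rw [sa_sym i j i' j' hj hi k]

lemma Rrel_same {n : ℕ} (v : Fin (n + 2) → Fin n → ℝ) (i : Fin (n + 2)) :
    Rrel v i i = 0 := Fin.insertNth_apply_same i 0 _

lemma Rrel_succAbove {n : ℕ} (v : Fin (n + 2) → Fin n → ℝ) (i : Fin (n + 2)) (j' : Fin (n + 1)) :
    Rrel v i (i.succAbove j') = (-1 : ℝ) ^ (j' : ℕ) * (Dmat v i j').det :=
  Fin.insertNth_apply_succAbove i 0 _ j'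

lemma Rrel_ne {n : ℕ} (v : Fin (n + 2) → Fin n → ℝ) (hv : HerSpan v)
    (i k : Fin (n + 2)) (hk : k ≠ i) : Rrel v i k ≠ 0 := by
  obtain ⟨j', rfl⟩ := Fin.exists_succAbove_eq hk
  rw [Rrel_succAbove]
  exact mul_ne_zero (pow_ne_zero _ (by norm_num)) (Dmat_det_ne v hv i j')

lemma Rrel_rel {n : ℕ} (v : Fin (n + 2) → Fin n → ℝ) (i : Fin (n + 2)) (a : Fin n) :
    ∑ k : Fin (n + 2), Rrel v i k * v k a = 0 := by
  rw [Fin.sum_univ_succAbove (fun k => Rrel v i k * v k a) i]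
  simp only [Rrel_same, zero_mul, zero_add, Rrel_succAbove]
  exact cramer_rel (fun j => v (i.succAbove j)) a

lemma ker_eq_zero {n : ℕ} (v : Fin (n + 2) → Fin n → ℝ) (hv : HerSpan v)
    (i : Fin (n + 2)) (j' : Fin (n + 1)) (x : Fin (n + 2) → ℝ)
    (hrel : ∀ a, ∑ k : Fin (n + 2), x k * v k a = 0)
    (hxi : x i = 0) (hxj : x (i.succAbove j') = 0) : x = 0 := by
  set c : Fin n → ℝ := fun k => x (i.succAbove (j'.succAbove k)) with hcdef
  have hmv : (Dmat v i j').mulVec c = 0 := by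
    funext a
    have h := hrel a
    rw [Fin.sum_univ_succAbove (fun k => x k * v k a) i,
      Fin.sum_univ_succAbove (fun k' => x (i.succAbove k') * v (i.succAbove k') a) j',
      hxi, hxj, zero_mul, zero_mul, zero_add, zero_add] at h
    show ∑ k, (Dmat v i j') a k * c k = 0
    rw [← h]
    apply Finset.sum_congr rfl
    intro k _
    simp [Dmat, hcdef, mul_comm]
  have hc0 : c = 0 := Matrix.eq_zero_of_mulVec_eq_zero (Dmat_det_ne v hv i j') hmv
  funext k
  by_cases hki : k = i
  · rw [hki]; exact hxi
  obtain ⟨k', rfl⟩ := Fin.exists_succAbove_eq hki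
  by_cases hkj : k' = j'
  · rw [hkj]; exact hxj
  obtain ⟨k'', rfl⟩ := Fin.exists_succAbove_eq hkj
  exact congrFun hc0 k''

lemma nu_exists {n : ℕ} (v : Fin (n + 2) → Fin n → ℝ) (hv : HerSpan v) (i : Fin (n + 2)) :
    ∃ ν : ℝ, ν ≠ 0 ∧ ∀ k, Rrel v 1 i * Rrel v 0 k - Rrel v 0 i * Rrel v 1 k
      = ν * Rrel v i k := by
  have h01 : (0 : Fin (n + 2)) ≠ 1 := by simp [Fin.ext_iff]
  set h : Fin (n + 2) → ℝ := fun k => Rrel v 1 i * Rrel v 0 k - Rrel v 0 i * Rrel v 1 k with hh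
  have hrelh : ∀ a, ∑ k : Fin (n + 2), h k * v k a = 0 := by
    intro a
    have e : ∀ k, h k * v k a
        = Rrel v 1 i * (Rrel v 0 k * v k a) - Rrel v 0 i * (Rrel v 1 k * v k a) := by
      intro k; rw [hh]; ring
    rw [Finset.sum_congr rfl (fun k _ => e k), Finset.sum_sub_distrib, ← Finset.mul_sum,
      ← Finset.mul_sum, Rrel_rel, Rrel_rel, mul_zero, mul_zero, sub_zero]
  have hhi : h i = 0 := by rw [hh]; ring
  set j0 : Fin (n + 2) := i.succAbove 0 with hj0
  have hRj0 : Rrel v i j0 ≠ 0 := Rrel_ne v hv i j0 (Fin.succAbove_ne i 0)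
  set μ : ℝ := h j0 / Rrel v i j0 with hμ
  have hzero : (fun k => h k - μ * Rrel v i k) = 0 := by
    apply ker_eq_zero v hv i 0 _ _ _ _
    · intro a
      have e : ∀ k, (h k - μ * Rrel v i k) * v k a
          = h k * v k a - μ * (Rrel v i k * v k a) := by intro k; ring
      rw [Finset.sum_congr rfl (fun k _ => e k), Finset.sum_sub_distrib, hrelh, ← Finset.mul_sum,
        Rrel_rel, mul_zero, sub_zero]
    · rw [hhi, Rrel_same, mul_zero, sub_zero]
    · rw [hμ]; field_simp; rw [← hj0]; ring
  have hprop : ∀ k, h k = μ * Rrel v i k := by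
    intro k
    have := congrFun hzero k
    simpa [sub_eq_zero] using this
  refine ⟨μ, ?_, hprop⟩
  intro hμ0
  have hall : ∀ k, h k = 0 := by intro k; rw [hprop k, hμ0, zero_mul]
  by_cases hi0 : i = 0
  · have h1 := hall 1
    rw [hh] at h1
    simp only [hi0, Rrel_same, mul_zero, sub_zero] at h1
    rcases mul_eq_zero.1 h1 with h' | h'
    · exact Rrel_ne v hv 1 0 h01 h'
    · exact Rrel_ne v hv 0 1 (Ne.symm h01) h'
  · have h1 := hall 0
    rw [hh] at h1
    simp only [Rrel_same, mul_zero, zero_sub, neg_eq_zero] at h1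
    rcases mul_eq_zero.1 h1 with h' | h'
    · exact Rrel_ne v hv 0 i hi0 h'
    · exact Rrel_ne v hv 1 0 h01 h'

lemma comb {n : ℕ} (hn : Even n) (x y : Fin (n + 2) → ℝ)
    (hq : ∀ i j : Fin (n + 2), i ≠ j → x i * y j - x j * y i ≠ 0) :
    ∑ i : Fin (n + 2), ∏ j' : Fin (n + 1),
      Real.sign (x i * y (i.succAbove j') - x (i.succAbove j') * y i) = 0 := by
  classical
  set s : Fin (n + 2) → WithTop ℝ :=
    fun i => if x i = 0 then ⊤ else ((y i / x i : ℝ) : WithTop ℝ) with hs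
  set c : Fin (n + 2) → ℝ :=
    fun i => if x i = 0 then Real.sign (y i) else Real.sign (x i) with hc
  have hy0 : ∀ i, x i = 0 → y i ≠ 0 := by
    intro i hxi hyi
    have h01 : (0 : Fin (n + 2)) ≠ 1 := by simp [Fin.ext_iff]
    by_cases hi : i = 0
    · exact hq i 1 (by rw [hi]; exact h01) (by rw [hxi, hyi]; ring)
    · exact hq i 0 hi (by rw [hxi, hyi]; ring)
  have hsne : ∀ i j, i ≠ j → s i ≠ s j := by
    intro i j hne
    by_cases hxi : x i = 0 <;> by_cases hxj : x j = 0
    · exact absurd (by rw [hxi, hxj]; ring) (hq i j hne)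
    · simp [hs, hxi, hxj]
    · simp [hs, hxi, hxj]
    · simp only [hs, hxi, hxj, if_false, ite_false, Ne, WithTop.coe_eq_coe]
      intro h
      rw [div_eq_div_iff hxi hxj] at h
      exact hq i j hne (by linear_combination -h)
  have hc2 : ∀ i, c i * c i = 1 := by
    intro i
    by_cases hxi : x i = 0
    · simp only [hc, hxi, ite_true, if_true]
      exact sgn_sq (hy0 i hxi)
    · simp only [hc, hxi, ite_false, if_false]
      exact sgn_sq hxi
  have key : ∀ i j, i ≠ j → Real.sign (x i * y j - x j * y i)
      = c i * c j * (if s i < s j then 1 else -1) := by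
    intro i j hne
    by_cases hxi : x i = 0 <;> by_cases hxj : x j = 0
    · exact absurd (by rw [hxi, hxj]; ring) (hq i j hne)
    · -- x i = 0, x j ≠ 0 : s i = ⊤
      have h1 : x i * y j - x j * y i = -(x j * y i) := by rw [hxi]; ring
      have hsi : s i = ⊤ := by simp [hs, hxi]
      have hci : c i = Real.sign (y i) := by simp [hc, hxi]
      have hcj : c j = Real.sign (x j) := by simp [hc, hxj]
      rw [h1, Real.sign_neg, sgn_mul, hsi, hci, hcj, if_neg not_top_lt]
      ring
    · have h1 : x i * y j - x j * y i = x i * y j := by rw [hxj]; ring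
      have hsi : s i = ((y i / x i : ℝ) : WithTop ℝ) := by simp [hs, hxi]
      have hsj : s j = ⊤ := by simp [hs, hxj]
      have hci : c i = Real.sign (x i) := by simp [hc, hxi]
      have hcj : c j = Real.sign (y j) := by simp [hc, hxj]
      rw [h1, sgn_mul, hsi, hsj, hci, hcj, if_pos (WithTop.coe_lt_top _)]
      ring
    · have h1 : x i * y j - x j * y i = x i * x j * (y j / x j - y i / x i) := by
        field_simp
      have hsi : s i = ((y i / x i : ℝ) : WithTop ℝ) := by simp [hs, hxi]
      have hsj : s j = ((y j / x j : ℝ) : WithTop ℝ) := by simp [hs, hxj]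
      have hci : c i = Real.sign (x i) := by simp [hc, hxi]
      have hcj : c j = Real.sign (x j) := by simp [hc, hxj]
      rw [h1, sgn_mul, sgn_mul, hsi, hsj, hci, hcj]
      simp only [WithTop.coe_lt_coe]
      by_cases hlt : y i / x i < y j / x j
      · rw [if_pos hlt, Real.sign_of_pos (show (0:ℝ) < y j / x j - y i / x i by linarith)]
      · have hne' : y i / x i ≠ y j / x j := by
          intro h
          rw [div_eq_div_iff hxi hxj] at h
          exact hq i j hne (by linear_combination -h)
        have hgt : y j / x j < y i / x i := lt_of_le_of_ne (not_lt.1 hlt) (Ne.symm hne')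
        rw [if_neg hlt, Real.sign_of_neg (show y j / x j - y i / x i < (0:ℝ) by linarith)]
  -- rank function
  set r : Fin (n + 2) → ℕ := fun i => (Finset.univ.filter (fun j => s j < s i)).card with hr
  have hPi : ∀ i : Fin (n + 2), (∏ j' : Fin (n + 1),
      Real.sign (x i * y (i.succAbove j') - x (i.succAbove j') * y i))
      = (∏ j, c j) * (-1 : ℝ) ^ (r i) := by
    intro i
    have step1 : ∀ j' : Fin (n + 1),
        Real.sign (x i * y (i.succAbove j') - x (i.succAbove j') * y i)
        = c i * c (i.succAbove j') * (if s (i.succAbove j') < s i then -1 else 1) := by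
      intro j'
      have hne := Fin.ne_succAbove i j'
      rw [key i (i.succAbove j') hne]
      congr 1
      have hne2 := hsne i (i.succAbove j') hne
      rcases lt_or_gt_of_ne hne2 with h | h
      · rw [if_pos h, if_neg (asymm h)]
      · rw [if_neg (asymm h), if_pos h]
    rw [Finset.prod_congr rfl (fun j' _ => step1 j'), Finset.prod_mul_distrib,
      Finset.prod_mul_distrib, Finset.prod_const, Finset.card_univ, Fintype.card_fin]
    have hcn : c i ^ n = 1 := by
      obtain ⟨k, hk⟩ := hn
      rw [hk, ← two_mul, pow_mul, sq, hc2, one_pow]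
    have hall : c i ^ (n + 1) * ∏ j', c (i.succAbove j') = ∏ j, c j := by
      calc c i ^ (n + 1) * ∏ j', c (i.succAbove j')
          = c i ^ n * (c i * ∏ j', c (i.succAbove j')) := by ring
        _ = c i ^ n * ∏ j, c j := by rw [← Fin.prod_univ_succAbove c i]
        _ = ∏ j, c j := by rw [hcn, one_mul]
    rw [mul_assoc, ← mul_assoc, hall]
    congr 1
    -- the ite product equals (-1)^(r i)
    have hgi : (if s i < s i then (-1 : ℝ) else 1) = 1 := by rw [if_neg (lt_irrefl _)]
    calc (∏ j' : Fin (n + 1), if s (i.succAbove j') < s i then (-1 : ℝ) else 1)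
        = ∏ j, (if s j < s i then (-1 : ℝ) else 1) := by
          rw [Fin.prod_univ_succAbove (fun j => if s j < s i then (-1 : ℝ) else 1) i, hgi,
            one_mul]
      _ = (-1 : ℝ) ^ (r i) := by
          rw [Finset.prod_ite, Finset.prod_const, Finset.prod_const, one_pow, mul_one, hr]
  rw [Finset.sum_congr rfl (fun i _ => hPi i), ← Finset.mul_sum]
  have hrlt : ∀ i, r i < n + 2 := by
    intro i
    have : (Finset.univ.filter (fun j => s j < s i)) ⊂ Finset.univ := by
      refine ⟨Finset.filter_subset _ _, fun hsub => ?_⟩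
      have := hsub (Finset.mem_univ i)
      rw [Finset.mem_filter] at this
      exact absurd this.2 (lt_irrefl _)
    have := Finset.card_lt_card this
    simpa [Finset.card_univ] using this
  have hmono : ∀ i j, s i < s j → r i < r j := by
    intro i j hij
    apply Finset.card_lt_card
    refine ⟨fun k hk => ?_, fun hsub => ?_⟩
    · rw [Finset.mem_filter] at hk ⊢
      exact ⟨hk.1, lt_trans hk.2 hij⟩
    · have := hsub (Finset.mem_filter.2 ⟨Finset.mem_univ i, hij⟩)
      rw [Finset.mem_filter] at this
      exact absurd this.2 (lt_irrefl _)
  have hrinj : Function.Injective r := by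
    intro i j hrij
    by_contra hne
    rcases lt_or_gt_of_ne (hsne i j hne) with h | h
    · exact absurd hrij (Nat.ne_of_lt (hmono i j h))
    · exact absurd hrij.symm (Nat.ne_of_lt (hmono j i h))
  have himg : Finset.univ.image r = Finset.range (n + 2) := by
    apply Finset.eq_of_subset_of_card_le
    · intro k hk
      rw [Finset.mem_image] at hk
      obtain ⟨i, _, rfl⟩ := hk
      exact Finset.mem_range.2 (hrlt i)
    · rw [Finset.card_range, Finset.card_image_of_injective _ hrinj, Finset.card_univ,
        Fintype.card_fin]
  have hsum : ∑ i : Fin (n + 2), (-1 : ℝ) ^ (r i) = 0 := by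
    rw [← Finset.sum_image (fun i _ j _ h => hrinj h), himg, neg_one_geom_sum,
      if_pos (by obtain ⟨k, hk⟩ := hn; exact ⟨k + 1, by omega⟩)]
  rw [hsum, mul_zero]

/-- the coboundary of `pcoc` vanishes on hereditarily spanning
`(n+2)`-tuples: `∑_{i=0}^{n+1} (−1)^i pcoc(v_0,…,v̂_i,…,v_{n+1}) = 0`. -/
theorem stmt6 (n : ℕ) (hn : 0 < n) (he : Even n)
    (v : Fin (n + 2) → (Fin n → ℝ)) (hv : HerSpan v) :
    ∑ i : Fin (n + 2), (-1 : ℝ) ^ (i : ℕ) * pcoc (v ∘ i.succAbove) = 0 := by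
  classical
  choose ν hν0 hνe using fun i => nu_exists v hv i
  have hq : ∀ i k, Rrel v 0 i * Rrel v 1 k - Rrel v 0 k * Rrel v 1 i
      = -(ν i * Rrel v i k) := by
    intro i k
    rw [← hνe i k]; ring
  have hqne : ∀ i k : Fin (n + 2), i ≠ k →
      Rrel v 0 i * Rrel v 1 k - Rrel v 0 k * Rrel v 1 i ≠ 0 := by
    intro i k hik
    rw [hq i k]
    exact neg_ne_zero.2 (mul_ne_zero (hν0 i) (Rrel_ne v hv i k (Ne.symm hik)))
  -- (-1)^i * sign (ν i) is a constant
  have hpair : ∀ i j : Fin (n + 2), i ≠ j →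
      (-1 : ℝ) ^ (i : ℕ) * Real.sign (ν i) = (-1 : ℝ) ^ (j : ℕ) * Real.sign (ν j) := by
    intro i j hne
    obtain ⟨j', hj'⟩ := Fin.exists_succAbove_eq (Ne.symm hne)
    obtain ⟨i', hi'⟩ := Fin.exists_succAbove_eq hne
    have hcross : ν i * Rrel v i j = -(ν j * Rrel v j i) := by
      have h1 := hq i j
      have h2 := hq j i
      linear_combination h1 + h2
    have hd : (Dmat v i j').det ≠ 0 := Dmat_det_ne v hv i j'
    have e1 : Rrel v i j = (-1 : ℝ) ^ (j' : ℕ) * (Dmat v i j').det := by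
      rw [← hj', Rrel_succAbove]
    have e2 : Rrel v j i = (-1 : ℝ) ^ (i' : ℕ) * (Dmat v j i').det := by
      rw [← hi', Rrel_succAbove]
    have e3 : (Dmat v j i').det = (Dmat v i j').det := by
      rw [Dmat_sym v i j i' j' hj' hi']
    rw [e1, e2, e3] at hcross
    have e0 : ν i * (-1 : ℝ) ^ (j' : ℕ) = -(ν j * (-1 : ℝ) ^ (i' : ℕ)) :=
      mul_right_cancel₀ hd (by linear_combination hcross)
    have e1s := congrArg Real.sign e0
    rw [sgn_mul, Real.sign_neg, sgn_mul, sgn_neg_one_pow, sgn_neg_one_pow] at e1s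
    have hb2 : ((-1 : ℝ) ^ (j' : ℕ)) * ((-1 : ℝ) ^ (j' : ℕ)) = 1 := by
      rw [← pow_add]
      exact Even.neg_one_pow ⟨_, rfl⟩
    have ha2 : ((-1 : ℝ) ^ (i : ℕ)) * ((-1 : ℝ) ^ (i : ℕ)) = 1 := by
      rw [← pow_add]
      exact Even.neg_one_pow ⟨_, rfl⟩
    have hp' : ((-1 : ℝ) ^ (i' : ℕ)) * ((-1 : ℝ) ^ (j' : ℕ)) * (-1)
        = ((-1 : ℝ) ^ (i : ℕ)) * ((-1 : ℝ) ^ (j : ℕ)) := by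
      have hp : (-1 : ℝ) ^ ((i' : ℕ) + (j' : ℕ) + 1) = (-1 : ℝ) ^ ((i : ℕ) + (j : ℕ)) := by
        rw [sa_parity i j i' j' hj' hi']
      simpa [pow_add, pow_succ] using hp
    linear_combination (((-1 : ℝ) ^ (i : ℕ)) * ((-1 : ℝ) ^ (j' : ℕ))) * e1s
      - (((-1 : ℝ) ^ (i : ℕ)) * Real.sign (ν i)) * hb2
      + (((-1 : ℝ) ^ (j : ℕ)) * Real.sign (ν j)) * ha2
      + (((-1 : ℝ) ^ (i : ℕ)) * Real.sign (ν j)) * hp'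
  have hnuconst : ∀ i : Fin (n + 2),
      (-1 : ℝ) ^ (i : ℕ) * Real.sign (ν i) = Real.sign (ν 0) := by
    intro i
    by_cases hi0 : i = 0
    · rw [hi0]; simp
    · rw [hpair i 0 hi0]; simp
  have hsgnD : ∀ (i : Fin (n + 2)) (j' : Fin (n + 1)),
      Real.sign ((Dmat v i j').det)
        = (-1 : ℝ) ^ (j' : ℕ) * (-(Real.sign (ν i))) *
          Real.sign (Rrel v 0 i * Rrel v 1 (i.succAbove j')
            - Rrel v 0 (i.succAbove j') * Rrel v 1 i) := by
    intro i j'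
    have h1 : Real.sign (Rrel v i (i.succAbove j'))
        = (-1 : ℝ) ^ (j' : ℕ) * Real.sign ((Dmat v i j').det) := by
      rw [Rrel_succAbove, sgn_mul, sgn_neg_one_pow]
    have hqs : Real.sign (Rrel v 0 i * Rrel v 1 (i.succAbove j')
          - Rrel v 0 (i.succAbove j') * Rrel v 1 i)
        = -(Real.sign (ν i) * ((-1 : ℝ) ^ (j' : ℕ) * Real.sign ((Dmat v i j').det))) := by
      rw [hq i (i.succAbove j'), Real.sign_neg, sgn_mul, h1]
    rw [hqs]
    have hb2 : ((-1 : ℝ) ^ (j' : ℕ)) * ((-1 : ℝ) ^ (j' : ℕ)) = 1 := by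
      rw [← pow_add]
      exact Even.neg_one_pow ⟨_, rfl⟩
    have hs2 : Real.sign (ν i) * Real.sign (ν i) = 1 := sgn_sq (hν0 i)
    linear_combination
      (-(Real.sign ((Dmat v i j').det) * (Real.sign (ν i) * Real.sign (ν i)))) * hb2
      - Real.sign ((Dmat v i j').det) * hs2
  have hpcoc : ∀ i : Fin (n + 2),
      pcoc (v ∘ i.succAbove) = ∏ j' : Fin (n + 1), Real.sign ((Dmat v i j').det) := by
    intro i
    rfl
  have hprod : ∀ i : Fin (n + 2),
      (-1 : ℝ) ^ (i : ℕ) * pcoc (v ∘ i.succAbove)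
        = ((∏ j' : Fin (n + 1), (-1 : ℝ) ^ (j' : ℕ)) * (-(Real.sign (ν 0)))) *
          ∏ j' : Fin (n + 1), Real.sign (Rrel v 0 i * Rrel v 1 (i.succAbove j')
            - Rrel v 0 (i.succAbove j') * Rrel v 1 i) := by
    intro i
    rw [hpcoc i, Finset.prod_congr rfl (fun j' _ => hsgnD i j'), Finset.prod_mul_distrib,
      Finset.prod_mul_distrib, Finset.prod_const, Finset.card_univ, Fintype.card_fin]
    have hA2 : (-(Real.sign (ν i))) * (-(Real.sign (ν i))) = 1 := by
      rw [neg_mul_neg]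
      exact sgn_sq (hν0 i)
    have hApow : (-(Real.sign (ν i))) ^ (n + 1) = -(Real.sign (ν i)) := by
      obtain ⟨k, hk⟩ := he
      rw [pow_succ, hk, pow_add, ← mul_pow, hA2, one_pow, one_mul]
    rw [hApow]
    linear_combination
      (-((∏ j' : Fin (n + 1), (-1 : ℝ) ^ (j' : ℕ)) *
        (∏ j' : Fin (n + 1), Real.sign (Rrel v 0 i * Rrel v 1 (i.succAbove j')
          - Rrel v 0 (i.succAbove j') * Rrel v 1 i)))) * hnuconst i
  rw [Finset.sum_congr rfl (fun i _ => hprod i), ← Finset.mul_sum,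
    comb he (fun i => Rrel v 0 i) (fun i => Rrel v 1 i) hqne, mul_zero]

end
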